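/- Let s > 0, U ⊆ ℝⁿ open, m ∈ ℕ, g₁, …, g_m : U → ℝ continuous maps that are C^{1,1}-submersions on their zero sets, and let Ω = {x ∈ U | g₁(x) ≤ 0, …, g_m(x) ≤ 0} be closed in ℝⁿ and connected. Assume 0 is a boundary point of Ω and g₁(0) = 0. If liminf_{t→0⁺} g₁'(t·h)h / t > (1/s)·‖g₁'(0)‖·‖h‖² for every nonzero h ∈ C(0) ∩ ker g₁'(0), then the vector v = g₁'(0)* / ‖g₁'(0)‖ quadratically supports Ω with radius s at 0 locally. -/

import Mathlib

open Filter Metric Set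
open scoped Topology RealInnerProductSpace NNReal

/-- `g` is a `C^{1,1}`-submersion on its zero set (relative to the open set `U`). -/
def C11SubmersionOnZeroSet {n : ℕ} (U : Set (EuclideanSpace ℝ (Fin n)))
    (g : EuclideanSpace ℝ (Fin n) → ℝ) : Prop :=
  ∀ x ∈ U, g x = 0 →
    (∃ V, IsOpen V ∧ x ∈ V ∧ V ⊆ U ∧ (∀ y ∈ V, DifferentiableAt ℝ g y) ∧
      ∃ K : ℝ≥0, LipschitzOnWith K (fun y => fderiv ℝ g y) V) ∧
    fderiv ℝ g x ≠ 0

/-- The vector `v` quadratically supports `Ω` with radius `s` at `x` locally. -/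
def QuadSupportsAt {n : ℕ} (s : ℝ) (Ω : Set (EuclideanSpace ℝ (Fin n)))
    (v x : EuclideanSpace ℝ (Fin n)) : Prop :=
  ‖v‖ = 1 ∧ ∃ U' ∈ 𝓝 x, ∀ (h : EuclideanSpace ℝ (Fin n)) (μ : ℝ),
    ⟪h, v⟫ = 0 → x + h - μ • v ∈ U' ∩ Ω → ‖h‖ ^ 2 ≤ 2 * s * μ

set_option maxHeartbeats 4000000 in
/-- Lemma 15 (case (iii)): under the strict second-order inequality on the critical cone of
the first constraint at `0`, the normalized Riesz representative of `g₁'(0)` quadratically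
supports `Ω` with radius `s` at `0` locally. -/
theorem quadSupport_of_strict_secondOrder {n m : ℕ} (hm : 0 < m) (s : ℝ) (hs : 0 < s)
    (U : Set (EuclideanSpace ℝ (Fin n))) (hU : IsOpen U)
    (g : Fin m → EuclideanSpace ℝ (Fin n) → ℝ)
    (hgc : ∀ i, ContinuousOn (g i) U)
    (hgs : ∀ i, C11SubmersionOnZeroSet U (g i))
    (Ω : Set (EuclideanSpace ℝ (Fin n)))
    (hΩ : Ω = {x | x ∈ U ∧ ∀ i, g i x ≤ 0})
    (hcl : IsClosed Ω) (hconn : IsPreconnected Ω)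
    (hb : (0 : EuclideanSpace ℝ (Fin n)) ∈ frontier Ω)
    (hz : g ⟨0, hm⟩ 0 = 0)
    (hsosc : ∀ h : EuclideanSpace ℝ (Fin n), h ≠ 0 →
      (∀ j, g j 0 = 0 → fderiv ℝ (g j) 0 h ≤ 0) →
      fderiv ℝ (g ⟨0, hm⟩) 0 h = 0 →
      (1 / s) * ‖fderiv ℝ (g ⟨0, hm⟩) 0‖ * ‖h‖ ^ 2 <
        liminf (fun t : ℝ => fderiv ℝ (g ⟨0, hm⟩) (t • h) h / t) (𝓝[>] (0:ℝ))) :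
    QuadSupportsAt s Ω
      (‖fderiv ℝ (g ⟨0, hm⟩) 0‖⁻¹ •
        (InnerProductSpace.toDual ℝ (EuclideanSpace ℝ (Fin n))).symm
          (fderiv ℝ (g ⟨0, hm⟩) 0))
      0 := by
  classical
  have h0Ω : (0 : EuclideanSpace ℝ (Fin n)) ∈ Ω := hcl.frontier_subset hb
  have h0U : (0 : EuclideanSpace ℝ (Fin n)) ∈ U := by
    rw [hΩ] at h0Ω; exact h0Ω.1
  obtain ⟨⟨V, hVopen, hV0, hVU, hVdiff, K, hK⟩, hL0⟩ := hgs ⟨0, hm⟩ 0 h0U hz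
  set f : EuclideanSpace ℝ (Fin n) → ℝ := g ⟨0, hm⟩ with hfdef
  set L : EuclideanSpace ℝ (Fin n) →L[ℝ] ℝ := fderiv ℝ f 0 with hLdef
  set R : EuclideanSpace ℝ (Fin n) := (InnerProductSpace.toDual ℝ (EuclideanSpace ℝ (Fin n))).symm L with hRdef
  have hRL : ∀ y : EuclideanSpace ℝ (Fin n), ⟪R, y⟫ = L y := fun y =>
    InnerProductSpace.toDual_symm_apply
  have hRnorm : ‖R‖ = ‖L‖ := LinearIsometryEquiv.norm_map _ _
  have hLpos : (0:ℝ) < ‖L‖ := norm_pos_iff.mpr hL0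
  set v : EuclideanSpace ℝ (Fin n) := ‖L‖⁻¹ • R with hvdef
  have hv1 : ‖v‖ = 1 := by
    rw [hvdef, norm_smul, hRnorm, norm_inv, norm_norm, inv_mul_cancel₀ hLpos.ne']
  have hLv : L v = ‖L‖ := by
    rw [← hRL, hvdef, real_inner_smul_right, real_inner_self_eq_norm_sq, hRnorm, sq]
    field_simp
  refine ⟨hv1, ?_⟩
  by_contra hcon
  push_neg at hcon
  -- extract a violating sequence
  have hseq : ∀ k : ℕ, ∃ h : EuclideanSpace ℝ (Fin n), ∃ μ : ℝ, ⟪h, v⟫ = 0 ∧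
      (h - μ • v ∈ ball (0 : EuclideanSpace ℝ (Fin n)) (1/(k+1)) ∩ Ω) ∧ 2 * s * μ < ‖h‖ ^ 2 := by
    intro k
    obtain ⟨h, μ, hp, hmem, hlt⟩ := hcon (ball (0 : EuclideanSpace ℝ (Fin n)) (1/(k+1)))
      (ball_mem_nhds _ (by positivity))
    rw [zero_add] at hmem
    exact ⟨h, μ, hp, hmem, hlt⟩
  choose hh μμ hperp hmem hlt using hseq
  set x : ℕ → EuclideanSpace ℝ (Fin n) := fun k => hh k - μμ k • v with hxdef
  have hxΩ : ∀ k, x k ∈ Ω := fun k => (hmem k).2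
  have hxU : ∀ k, x k ∈ U := by
    intro k; have := hxΩ k; rw [hΩ] at this; exact this.1
  have hxg : ∀ k, ∀ i, g i (x k) ≤ 0 := by
    intro k; have := hxΩ k; rw [hΩ] at this; exact this.2
  have hxball : ∀ k, ‖x k‖ < 1/(k+1) := by
    intro k
    have := (hmem k).1
    rwa [mem_ball, dist_zero_right] at this
  have hxtend : Tendsto x atTop (𝓝 0) := by
    rw [tendsto_zero_iff_norm_tendsto_zero]
    exact squeeze_zero (fun k => norm_nonneg _) (fun k => (hxball k).le)
      tendsto_one_div_add_atTop_nhds_zero_nat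
  -- basic facts about h, μ, x
  have hLh : ∀ k, L (hh k) = 0 := by
    intro k
    have h1 : ⟪hh k, R⟫ = 0 := by
      have := hperp k
      rw [hvdef, real_inner_smul_right] at this
      rcases mul_eq_zero.mp this with h | h
      · exact absurd h (by positivity)
      · exact h
    rw [← hRL, real_inner_comm]; exact h1
  have hLx : ∀ k, L (x k) = -(μμ k * ‖L‖) := by
    intro k
    rw [hxdef]
    simp only [map_sub, map_smul, hLh, hLv, smul_eq_mul, zero_sub, neg_inj]
  have hnormsq : ∀ k, ‖x k‖ ^ 2 = ‖hh k‖ ^ 2 + (μμ k) ^ 2 := by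
    intro k
    rw [hxdef]
    rw [norm_sub_sq_real, real_inner_smul_right, hperp, norm_smul, hv1, mul_one,
      mul_zero, mul_zero, sub_zero, Real.norm_eq_abs, sq_abs]
  have hxne : ∀ k, x k ≠ 0 := by
    intro k hx0
    have h1 := hnormsq k
    rw [hx0, norm_zero] at h1
    have h2 : ‖hh k‖ ^ 2 = 0 ∧ (μμ k)^2 = 0 := by
      constructor <;> nlinarith [sq_nonneg ‖hh k‖, sq_nonneg (μμ k)]
    have hμ0 : μμ k = 0 := sq_eq_zero_iff.mp h2.2
    have := hlt k
    rw [hμ0, h2.1] at this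
    linarith
  set r : ℕ → ℝ := fun k => ‖x k‖ with hrdef
  have hrpos : ∀ k, 0 < r k := fun k => norm_pos_iff.mpr (hxne k)
  have hrtend : Tendsto r atTop (𝓝 0) := by
    rw [hrdef]
    rw [← tendsto_zero_iff_norm_tendsto_zero] ; exact hxtend
  set dd : ℕ → EuclideanSpace ℝ (Fin n) := fun k => (r k)⁻¹ • x k with hdddef
  have hddmem : ∀ k, dd k ∈ sphere (0 : EuclideanSpace ℝ (Fin n)) 1 := by
    intro k
    have h1 : ‖dd k‖ = 1 := by
      simp only [hdddef, hrdef, norm_smul, norm_inv, norm_norm]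
      exact inv_mul_cancel₀ (hrpos k).ne'
    simpa [mem_sphere_iff_norm] using h1
  obtain ⟨d, hdsph, φ, hφ, hdtend⟩ := (isCompact_sphere (0 : EuclideanSpace ℝ (Fin n)) 1).tendsto_subseq hddmem
  have hd1 : ‖d‖ = 1 := by simpa [mem_sphere_iff_norm] using hdsph
  have hdne : d ≠ 0 := fun h => by rw [h, norm_zero] at hd1; norm_num at hd1
  have hφtend : Tendsto φ atTop atTop := hφ.tendsto_atTop
  have hxφ : Tendsto (fun k => x (φ k)) atTop (𝓝 0) := hxtend.comp hφtend
  have hrφ : Tendsto (fun k => r (φ k)) atTop (𝓝 0) := hrtend.comp hφtend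
  have hxrd : ∀ k, x k = r k • dd k := by
    intro k
    rw [hdddef]
    rw [smul_smul, mul_inv_cancel₀ (hrpos k).ne', one_smul]
  -- Step B : the limit direction is in the critical cone
  have hcone : ∀ j, g j 0 = 0 → fderiv ℝ (g j) 0 d ≤ 0 := by
    intro j hj
    obtain ⟨⟨V', hV'open, hV'0, hV'U, hV'diff, K', hK'⟩, -⟩ := hgs j 0 h0U hj
    have hdiffj : DifferentiableAt ℝ (g j) 0 := hV'diff 0 hV'0
    have hlo : (fun y => g j y - g j 0 - fderiv ℝ (g j) 0 (y - 0)) =o[𝓝 0]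
        (fun y : EuclideanSpace ℝ (Fin n) => y - 0) := hdiffj.hasFDerivAt.isLittleO
    have hlo2 : (fun k => g j (x (φ k)) - fderiv ℝ (g j) 0 (x (φ k))) =o[atTop]
        (fun k => x (φ k)) := by
      simpa [hj, Function.comp_def] using hlo.comp_tendsto hxφ
    have htend0 : Tendsto (fun k => (g j (x (φ k)) - fderiv ℝ (g j) 0 (x (φ k))) / r (φ k))
        atTop (𝓝 0) := hlo2.norm_right.tendsto_div_nhds_zero
    have htend1 : Tendsto (fun k => fderiv ℝ (g j) 0 (dd (φ k))) atTop
        (𝓝 (fderiv ℝ (g j) 0 d)) :=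
      ((fderiv ℝ (g j) 0).continuous.tendsto d).comp hdtend
    have htend2 : Tendsto (fun k => -((g j (x (φ k)) - fderiv ℝ (g j) 0 (x (φ k))) / r (φ k)))
        atTop (𝓝 0) := by simpa using htend0.neg
    refine le_of_tendsto_of_tendsto' htend1 htend2 ?_
    intro k
    have hr' := hrpos (φ k)
    have hg' := hxg (φ k) j
    simp only [hdddef, map_smul, smul_eq_mul]
    rw [div_eq_mul_inv]
    nlinarith [mul_nonneg (neg_nonneg.mpr hg') (inv_nonneg.mpr hr'.le)]
  -- L d = 0
  have hLdle : L d ≤ 0 := hcone ⟨0, hm⟩ hz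
  have hLd0 : L d = 0 := by
    have hLdge : (0:ℝ) ≤ L d := by
      have htend1 : Tendsto (fun k => L (dd (φ k))) atTop (𝓝 (L d)) :=
        (L.continuous.tendsto d).comp hdtend
      have htend2 : Tendsto (fun k => -(‖L‖ / (2*s)) * r (φ k)) atTop (𝓝 0) := by
        simpa using hrφ.const_mul (-(‖L‖/(2*s)))
      refine le_of_tendsto_of_tendsto' htend2 htend1 ?_
      intro k
      have hr' := hrpos (φ k)
      have hL' : L (dd (φ k)) = -(μμ (φ k) * ‖L‖) * (r (φ k))⁻¹ := by
        simp only [hdddef, map_smul, smul_eq_mul, hLx]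
        ring
      have h2sμ : 2*s*μμ (φ k) ≤ r (φ k)^2 := by
        nlinarith [hlt (φ k), hnormsq (φ k), sq_nonneg (μμ (φ k))]
      rw [hL']
      have h2s : (0:ℝ) < 2*s := by linarith
      have hμle : μμ (φ k) ≤ r (φ k)^2/(2*s) := by
        rw [le_div_iff₀ h2s]; linarith
      have hstep : μμ (φ k) * ‖L‖ * (r (φ k))⁻¹ ≤ (r (φ k)^2/(2*s)) * ‖L‖ * (r (φ k))⁻¹ :=
        mul_le_mul_of_nonneg_right (mul_le_mul_of_nonneg_right hμle hLpos.le)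
          (inv_nonneg.mpr hr'.le)
      have heq : (r (φ k)^2/(2*s)) * ‖L‖ * (r (φ k))⁻¹ = (‖L‖/(2*s)) * r (φ k) := by
        field_simp
      rw [heq] at hstep
      linarith
    linarith
  -- apply the second order condition
  have hkey := hsosc d hdne hcone hLd0
  rw [hd1] at hkey
  -- extract c and δ
  obtain ⟨ρ, hρpos, hρV⟩ := Metric.isOpen_iff.mp hVopen 0 hV0
  have hlip : ∀ y ∈ V, ∀ z ∈ V, ‖fderiv ℝ f y - fderiv ℝ f z‖ ≤ K * ‖y - z‖ := by
    intro y hy z hz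
    have := hK.dist_le_mul y hy z hz
    rwa [dist_eq_norm, dist_eq_norm] at this
  obtain ⟨c, hc1, hc2⟩ : ∃ c : ℝ, (1/s) * ‖L‖ * 1 ^ 2 < c ∧
      ∀ᶠ t in 𝓝[>] (0:ℝ), c < fderiv ℝ f (t • d) d / t := by
    obtain ⟨c, h1, h2⟩ := exists_between hkey
    refine ⟨c, h1, eventually_lt_of_lt_liminf h2 ⟨-(K:ℝ), ?_⟩⟩
    rw [eventually_map]
    filter_upwards [Ioo_mem_nhdsGT_of_mem (Set.left_mem_Ico.mpr hρpos)] with t ht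
    have htd : t • d ∈ V := by
      apply hρV
      rw [mem_ball, dist_zero_right, norm_smul, hd1, mul_one, Real.norm_eq_abs,
        abs_of_pos ht.1]
      exact ht.2
    have hb1 : ‖fderiv ℝ f (t • d) - L‖ ≤ (K:ℝ) * t := by
      have h3 := hlip (t • d) htd 0 hV0
      rw [← hLdef, sub_zero, norm_smul, hd1, mul_one, Real.norm_eq_abs,
        abs_of_pos ht.1] at h3
      exact h3
    have hb2 : |(fderiv ℝ f (t • d) - L) d| ≤ (K:ℝ) * t := by
      calc |(fderiv ℝ f (t • d) - L) d| ≤ ‖fderiv ℝ f (t • d) - L‖ * ‖d‖ := by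
            rw [← Real.norm_eq_abs]; exact (fderiv ℝ f (t • d) - L).le_opNorm d
        _ ≤ (K:ℝ) * t := by rw [hd1, mul_one]; exact hb1
    have hb3 := (abs_le.mp hb2).1
    rw [ContinuousLinearMap.sub_apply, hLd0, sub_zero] at hb3
    show -(K:ℝ) ≤ fderiv ℝ f (t • d) d / t
    rw [le_div_iff₀ ht.1]
    linarith
  obtain ⟨δ, hδpos, hδ⟩ : ∃ δ > 0, ∀ t : ℝ, 0 < t → t < δ → c * t < fderiv ℝ f (t • d) d := by
    obtain ⟨δ, hδpos, hδ⟩ := mem_nhdsGT_iff_exists_Ioo_subset.mp hc2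
    refine ⟨δ, hδpos, fun t ht1 ht2 => ?_⟩
    have h4 := hδ ⟨ht1, ht2⟩
    simp only [Set.mem_setOf_eq] at h4
    rw [lt_div_iff₀ ht1] at h4
    linarith
  -- choose a good index k
  have hc1' : ‖L‖ < s * c := by
    have h5 := hc1
    rw [one_pow, mul_one, one_div_mul_eq_div, div_lt_iff₀ hs] at h5
    linarith
  obtain ⟨k, hk1, hk2⟩ : ∃ k, r (φ k) < min ρ δ ∧
      s * (2 * (K:ℝ) * ‖dd (φ k) - d‖) < s * c - ‖L‖ := by
    have hεtend : Tendsto (fun k => s * (2 * (K:ℝ) * ‖dd (φ k) - d‖)) atTop (𝓝 0) := by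
      have h5 : Tendsto (fun k => ‖dd (φ k) - d‖) atTop (𝓝 0) := by
        simpa using (hdtend.sub_const d).norm
      simpa using (h5.const_mul (2*(K:ℝ))).const_mul s
    have he1 : ∀ᶠ k in atTop, r (φ k) < min ρ δ :=
      hrφ.eventually_lt_const (lt_min hρpos hδpos)
    have he2 : ∀ᶠ k in atTop, s * (2 * (K:ℝ) * ‖dd (φ k) - d‖) < s * c - ‖L‖ :=
      hεtend.eventually_lt_const (by linarith)
    exact (he1.and he2).exists
  -- the chosen point
  have hrr := hrpos (φ k)
  have hrρ : r (φ k) < ρ := lt_of_lt_of_le hk1 (min_le_left _ _)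
  have hrδ : r (φ k) < δ := lt_of_lt_of_le hk1 (min_le_right _ _)
  have hnormy : ‖x (φ k)‖ = r (φ k) := rfl
  have hyV : ∀ t : ℝ, t ∈ Icc (0:ℝ) 1 → t • x (φ k) ∈ V := by
    intro t ht
    apply hρV
    rw [mem_ball, dist_zero_right, norm_smul, hnormy, Real.norm_eq_abs, abs_of_nonneg ht.1]
    calc t * r (φ k) ≤ 1 * r (φ k) := mul_le_mul_of_nonneg_right ht.2 hrr.le
      _ < ρ := by rw [one_mul]; exact hrρ
  have hdV : ∀ t : ℝ, t ∈ Icc (0:ℝ) 1 → (t * r (φ k)) • d ∈ V := by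
    intro t ht
    apply hρV
    rw [mem_ball, dist_zero_right, norm_smul, hd1, mul_one, Real.norm_eq_abs,
      abs_of_nonneg (mul_nonneg ht.1 hrr.le)]
    calc t * r (φ k) ≤ 1 * r (φ k) := mul_le_mul_of_nonneg_right ht.2 hrr.le
      _ < ρ := by rw [one_mul]; exact hrρ
  have hderiv : ∀ t ∈ uIcc (0:ℝ) 1,
      HasDerivAt (fun t : ℝ => f (t • x (φ k))) ((fderiv ℝ f (t • x (φ k))) (x (φ k))) t := by
    intro t ht
    rw [uIcc_of_le zero_le_one] at ht
    have h6 : HasDerivAt (fun t : ℝ => t • x (φ k)) (x (φ k)) t := by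
      simpa using (hasDerivAt_id t).smul_const (x (φ k))
    exact (hVdiff _ (hyV t ht)).hasFDerivAt.comp_hasDerivAt t h6
  have hcontD : ContinuousOn (fun t : ℝ => (fderiv ℝ f (t • x (φ k))) (x (φ k)))
      (uIcc (0:ℝ) 1) := by
    apply ContinuousOn.clm_apply _ continuousOn_const
    apply hK.continuousOn.comp (Continuous.continuousOn (continuous_id.smul continuous_const))
    intro t ht
    rw [uIcc_of_le zero_le_one] at ht
    exact hyV t ht
  have hint : IntervalIntegrable (fun t : ℝ => (fderiv ℝ f (t • x (φ k))) (x (φ k)))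
      MeasureTheory.volume 0 1 := hcontD.intervalIntegrable
  have hftc : ∫ t in (0:ℝ)..1, (fderiv ℝ f (t • x (φ k))) (x (φ k)) = f (x (φ k)) := by
    rw [intervalIntegral.integral_eq_sub_of_hasDerivAt hderiv hint]
    rw [one_smul, zero_smul, hz, sub_zero]
  have hbound : ∀ t ∈ Icc (0:ℝ) 1,
      (c * r (φ k)^2 - 2*(K:ℝ)*r (φ k)^2*‖dd (φ k) - d‖) * t + L (x (φ k)) ≤
        (fderiv ℝ f (t • x (φ k))) (x (φ k)) := by
    intro t ht
    have hA : ‖fderiv ℝ f (t • x (φ k)) - L‖ ≤ (K:ℝ) * (t * r (φ k)) := by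
      have h7 := hlip (t • x (φ k)) (hyV t ht) 0 hV0
      rw [← hLdef, sub_zero, norm_smul, hnormy, Real.norm_eq_abs, abs_of_nonneg ht.1] at h7
      exact h7
    have hAB : ‖fderiv ℝ f (t • x (φ k)) - fderiv ℝ f ((t * r (φ k)) • d)‖ ≤
        (K:ℝ) * (t * (r (φ k) * ‖dd (φ k) - d‖)) := by
      have h8 := hlip (t • x (φ k)) (hyV t ht) ((t * r (φ k)) • d) (hdV t ht)
      have h9 : t • x (φ k) - (t * r (φ k)) • d = t • (r (φ k) • (dd (φ k) - d)) := by
        rw [mul_smul, ← smul_sub, hxrd (φ k), ← smul_sub]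
      rw [h9, norm_smul, norm_smul, Real.norm_eq_abs, Real.norm_eq_abs,
        abs_of_nonneg ht.1, abs_of_nonneg hrr.le] at h8
      exact h8
    have hBd : c * (t * r (φ k)) ≤ (fderiv ℝ f ((t * r (φ k)) • d)) d := by
      rcases eq_or_lt_of_le ht.1 with h10 | h10
      · rw [← h10, zero_mul, zero_smul, mul_zero, ← hLdef, hLd0]
      · refine le_of_lt (hδ _ (mul_pos h10 hrr) ?_)
        calc t * r (φ k) ≤ 1 * r (φ k) := mul_le_mul_of_nonneg_right ht.2 hrr.le
          _ < δ := by rw [one_mul]; exact hrδ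
    have hdecomp : (fderiv ℝ f (t • x (φ k))) (x (φ k)) =
        (fderiv ℝ f (t • x (φ k)) - L) (x (φ k) - r (φ k) • d)
        + r (φ k) * ((fderiv ℝ f (t • x (φ k)) - fderiv ℝ f ((t * r (φ k)) • d)) d)
        + r (φ k) * ((fderiv ℝ f ((t * r (φ k)) • d)) d) + L (x (φ k)) := by
      simp only [ContinuousLinearMap.sub_apply, map_sub, map_smul, smul_eq_mul, hLd0]
      ring
    have hnorm1 : ‖x (φ k) - r (φ k) • d‖ = r (φ k) * ‖dd (φ k) - d‖ := by
      rw [hxrd (φ k), ← smul_sub, norm_smul, Real.norm_eq_abs, abs_of_nonneg hrr.le]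
    have e1 : |(fderiv ℝ f (t • x (φ k)) - L) (x (φ k) - r (φ k) • d)| ≤
        ((K:ℝ) * (t * r (φ k))) * (r (φ k) * ‖dd (φ k) - d‖) := by
      calc |(fderiv ℝ f (t • x (φ k)) - L) (x (φ k) - r (φ k) • d)|
          ≤ ‖fderiv ℝ f (t • x (φ k)) - L‖ * ‖x (φ k) - r (φ k) • d‖ := by
            rw [← Real.norm_eq_abs]; exact ContinuousLinearMap.le_opNorm _ _
        _ ≤ _ := by rw [hnorm1]; exact mul_le_mul_of_nonneg_right hA (by positivity)
    have e2 : |(fderiv ℝ f (t • x (φ k)) - fderiv ℝ f ((t * r (φ k)) • d)) d| ≤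
        (K:ℝ) * (t * (r (φ k) * ‖dd (φ k) - d‖)) := by
      calc |(fderiv ℝ f (t • x (φ k)) - fderiv ℝ f ((t * r (φ k)) • d)) d|
          ≤ ‖fderiv ℝ f (t • x (φ k)) - fderiv ℝ f ((t * r (φ k)) • d)‖ * ‖d‖ := by
            rw [← Real.norm_eq_abs]; exact ContinuousLinearMap.le_opNorm _ _
        _ ≤ _ := by rw [hd1, mul_one]; exact hAB
    have e1' := (abs_le.mp e1).1
    have e2' := (abs_le.mp e2).1
    have e2'' := mul_le_mul_of_nonneg_left e2' hrr.le
    have e3 := mul_le_mul_of_nonneg_left hBd hrr.le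
    rw [hdecomp]
    linarith [e1', e2'', e3]
  have hintlhs : IntervalIntegrable
      (fun t : ℝ => (c * r (φ k)^2 - 2*(K:ℝ)*r (φ k)^2*‖dd (φ k) - d‖) * t + L (x (φ k)))
      MeasureTheory.volume 0 1 := by
    exact ((continuous_const.mul continuous_id).add continuous_const).intervalIntegrable 0 1
  have hmono := intervalIntegral.integral_mono_on (by norm_num : (0:ℝ) ≤ 1) hintlhs hint hbound
  have hcalc : ∫ t in (0:ℝ)..1,
      ((c * r (φ k)^2 - 2*(K:ℝ)*r (φ k)^2*‖dd (φ k) - d‖) * t + L (x (φ k)))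
      = (c * r (φ k)^2 - 2*(K:ℝ)*r (φ k)^2*‖dd (φ k) - d‖)/2 + L (x (φ k)) := by
    rw [intervalIntegral.integral_add
      (show IntervalIntegrable
        (fun t : ℝ => (c * r (φ k)^2 - 2*(K:ℝ)*r (φ k)^2*‖dd (φ k) - d‖) * t)
        MeasureTheory.volume 0 1 from
        (continuous_const.mul continuous_id).intervalIntegrable 0 1)
      intervalIntegrable_const, intervalIntegral.integral_const_mul,
      integral_id, intervalIntegral.integral_const]
    norm_num
    ring
  rw [hcalc, hftc] at hmono
  have hfy : f (x (φ k)) ≤ 0 := hxg (φ k) ⟨0, hm⟩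
  have hLy := hLx (φ k)
  rw [hLy] at hmono
  have hM : (c * r (φ k)^2 - 2*(K:ℝ)*r (φ k)^2*‖dd (φ k) - d‖)/2 - μμ (φ k) * ‖L‖ ≤ 0 := by
    linarith [le_trans hmono hfy]
  have hrr2 : (0:ℝ) < r (φ k)^2 := by positivity
  have p1 := mul_lt_mul_of_pos_right hk2 (half_pos hrr2)
  have p2 := mul_le_mul_of_nonneg_left hM hs.le
  have p3 := mul_lt_mul_of_pos_left (hlt (φ k)) hLpos
  have p4 : ‖L‖ * r (φ k)^2 = ‖L‖ * ‖hh (φ k)‖^2 + ‖L‖ * (μμ (φ k))^2 := by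
    rw [hnormsq (φ k)]; ring
  have p6 : (0:ℝ) ≤ ‖L‖ * (μμ (φ k))^2 := by positivity
  nlinarith [p1, p2, p3, p4, p6]
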